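/- Let B > 0 and let f ∈ L²([0,B]). If ∫₀^B max(x−ξ,0)·f(x) dx = 0 for every ξ ∈ [0,B], then f = 0 almost everywhere on [0,B]. In other words, the restricted call operator γ is injective (its null space is trivial), and similarly the null spaces of γ*, γ*γ and γγ* reduce to {0}. -/

import Mathlib

open MeasureTheory Set Filter

lemma ae_zero_of_intervals (g : ℝ → ℝ) (hg : Integrable g volume)
    (h : ∀ a b : ℝ, a < b → ∫ x in Ioc a b, g x = 0) : g =ᵐ[volume] 0 := by
  have hmeas : AEMeasurable (fun x => ENNReal.ofReal (g x)) volume :=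
    ENNReal.measurable_ofReal.comp_aemeasurable hg.aemeasurable
  have hmeas' : AEMeasurable (fun x => ENNReal.ofReal (-g x)) volume :=
    ENNReal.measurable_ofReal.comp_aemeasurable hg.aemeasurable.neg
  have hfin : ∫⁻ x, ENNReal.ofReal (g x) ∂volume ≠ ⊤ := by
    refine ne_of_lt (lt_of_le_of_lt (lintegral_mono fun x => ?_) hg.2)
    rw [Real.enorm_eq_ofReal_abs]
    exact ENNReal.ofReal_le_ofReal (le_abs_self _)
  have hfin' : ∫⁻ x, ENNReal.ofReal (-g x) ∂volume ≠ ⊤ := by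
    refine ne_of_lt (lt_of_le_of_lt (lintegral_mono fun x => ?_) hg.2)
    rw [Real.enorm_eq_ofReal_abs]
    exact ENNReal.ofReal_le_ofReal (neg_le_abs _)
  have key : volume.withDensity (fun x => ENNReal.ofReal (g x)) =
      volume.withDensity (fun x => ENNReal.ofReal (-g x)) := by
    refine MeasureTheory.Measure.ext_of_Ioc' _ _ (fun a b hab => ?_) (fun a b hab => ?_)
    · rw [withDensity_apply _ measurableSet_Ioc]
      exact ne_of_lt (lt_of_le_of_lt (setLIntegral_le_lintegral _ _) hfin.lt_top)
    · rw [withDensity_apply _ measurableSet_Ioc, withDensity_apply _ measurableSet_Ioc]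
      have hint : Integrable g (volume.restrict (Ioc a b)) := hg.restrict
      have h0 := h a b hab
      rw [integral_eq_lintegral_pos_part_sub_lintegral_neg_part hint, sub_eq_zero] at h0
      have f1 : ∫⁻ x in Ioc a b, ENNReal.ofReal (g x) ∂volume ≠ ⊤ :=
        ne_of_lt (lt_of_le_of_lt (setLIntegral_le_lintegral _ _) hfin.lt_top)
      have f2 : ∫⁻ x in Ioc a b, ENNReal.ofReal (-g x) ∂volume ≠ ⊤ :=
        ne_of_lt (lt_of_le_of_lt (setLIntegral_le_lintegral _ _) hfin'.lt_top)
      exact (ENNReal.toReal_eq_toReal_iff' f1 f2).mp h0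
  have hae := (withDensity_eq_iff hmeas hmeas' hfin).mp key
  filter_upwards [hae] with x hx
  rw [Pi.zero_apply]
  by_contra hx0
  rcases lt_or_gt_of_ne hx0 with hlt | hgt
  · have : ENNReal.ofReal (g x) = 0 := ENNReal.ofReal_eq_zero.2 hlt.le
    rw [this] at hx
    exact absurd hx.symm (ne_of_gt (ENNReal.ofReal_pos.2 (by linarith)))
  · have : ENNReal.ofReal (-g x) = 0 := ENNReal.ofReal_eq_zero.2 (by linarith)
    rw [this] at hx
    exact absurd hx (ne_of_gt (ENNReal.ofReal_pos.2 hgt))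

variable {B : ℝ} {g : ℝ → ℝ}

lemma int_call (hgi : Integrable g volume) (hsupp : ∀ x, x ∉ Icc (0:ℝ) B → g x = 0) (ξ : ℝ) :
    Integrable (fun x => max (x - ξ) 0 * g x) volume := by
  refine Integrable.mono' ((hgi.abs.const_mul (B + |ξ|))) ?_ ?_
  · exact ((continuous_id.sub continuous_const).max continuous_const).aestronglyMeasurable.mul
      hgi.aestronglyMeasurable
  · refine Eventually.of_forall fun x => ?_
    by_cases hx : x ∈ Icc (0:ℝ) B
    · rw [Real.norm_eq_abs, abs_mul, abs_of_nonneg (le_max_right _ _)]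
      refine mul_le_mul_of_nonneg_right ?_ (abs_nonneg _)
      rcases hx with ⟨h0, h1⟩
      have := abs_nonneg ξ
      refine max_le (by cases abs_cases ξ <;> linarith) (by cases abs_cases ξ <;> linarith)
    · simp [hsupp x hx]

lemma int_put (hgi : Integrable g volume) (hsupp : ∀ x, x ∉ Icc (0:ℝ) B → g x = 0) (ξ : ℝ) :
    Integrable (fun x => max (ξ - x) 0 * g x) volume := by
  refine Integrable.mono' ((hgi.abs.const_mul |ξ|)) ?_ ?_
  · exact ((continuous_const.sub continuous_id).max continuous_const).aestronglyMeasurable.mul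
      hgi.aestronglyMeasurable
  · refine Eventually.of_forall fun x => ?_
    by_cases hx : x ∈ Icc (0:ℝ) B
    · rw [Real.norm_eq_abs, abs_mul, abs_of_nonneg (le_max_right _ _)]
      refine mul_le_mul_of_nonneg_right ?_ (abs_nonneg _)
      rcases hx with ⟨h0, h1⟩
      refine max_le (by cases abs_cases ξ <;> linarith) (abs_nonneg _)
    · simp [hsupp x hx]

lemma call_deriv (hgi : Integrable g volume) (hsupp : ∀ x, x ∉ Icc (0:ℝ) B → g x = 0) (ξ : ℝ) :
    HasDerivAt (fun s => ∫ x, max (x - s) 0 * g x) (-∫ x in Ioi ξ, g x) ξ := by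
  have hne : ∀ᵐ x : ℝ, x ≠ ξ := by
    have : volume ({ξ} : Set ℝ) = 0 := Real.volume_singleton
    rw [ae_iff]
    convert this using 2
    ext x; simp
  have key := hasDerivAt_integral_of_dominated_loc_of_lip (μ := volume)
      (F := fun s x => max (x - s) 0 * g x)
      (F' := fun x => -((Ioi ξ).indicator g x)) (x₀ := ξ) (bound := fun x => |g x|)
      (Metric.ball_mem_nhds ξ one_pos)
      (Eventually.of_forall fun s =>
        ((continuous_id.sub continuous_const).max continuous_const).aestronglyMeasurable.mul
          hgi.aestronglyMeasurable)
      (int_call hgi hsupp ξ)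
      ((hgi.aestronglyMeasurable.indicator measurableSet_Ioi).neg)
      (Eventually.of_forall fun x => ?_) hgi.abs ?_
  · have : ∫ x, -((Ioi ξ).indicator g x) = -∫ x in Ioi ξ, g x := by
      rw [integral_neg, integral_indicator measurableSet_Ioi]
    obtain ⟨-, key2⟩ := key
    rwa [this] at key2
  · -- Lipschitz
    refine LipschitzOnWith.mono (LipschitzWith.lipschitzOnWith ?_) (subset_univ _)
    refine LipschitzWith.of_dist_le_mul fun s t => ?_
    rw [Real.dist_eq, Real.dist_eq, ← sub_mul, abs_mul]
    have h1 : |max (x - s) 0 - max (x - t) 0| ≤ |(x - s) - (x - t)| :=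
      abs_max_sub_max_le_abs _ _ _
    have h2 : |(x - s) - (x - t)| = |s - t| := by rw [abs_sub_comm]; ring_nf
    calc |max (x - s) 0 - max (x - t) 0| * |g x| ≤ |s - t| * |g x| := by
          refine mul_le_mul_of_nonneg_right (h1.trans_eq h2) (abs_nonneg _)
      _ = |g x| * |s - t| := mul_comm _ _
      _ ≤ (Real.nnabs |g x| : ℝ) * |s - t| := by
          rw [Real.coe_nnabs, abs_abs]
  · -- a.e. differentiability
    filter_upwards [hne] with x hx
    rcases lt_or_gt_of_ne hx with hlt | hgt
    · -- x < ξ : function is 0 near ξ, indicator = 0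
      have hind : (Ioi ξ).indicator g x = 0 := indicator_of_notMem (by simpa using hlt.le) _
      rw [hind, neg_zero]
      have hev : (fun s => max (x - s) 0 * g x) =ᶠ[nhds ξ] fun _ => 0 := by
        filter_upwards [Ioi_mem_nhds hlt] with s hs
        rw [max_eq_right (by simp at hs ⊢; linarith), zero_mul]
      exact (hasDerivAt_const ξ (0:ℝ)).congr_of_eventuallyEq hev
    · -- ξ < x
      have hind : (Ioi ξ).indicator g x = g x := indicator_of_mem (mem_Ioi.2 hgt) _
      rw [hind]
      have hev : (fun s => max (x - s) 0 * g x) =ᶠ[nhds ξ] fun s => (x - s) * g x := by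
        filter_upwards [Iio_mem_nhds hgt] with s hs
        rw [max_eq_left (by simp at hs ⊢; linarith)]
      refine HasDerivAt.congr_of_eventuallyEq ?_ hev
      simpa using ((hasDerivAt_id ξ).const_sub x).mul_const (g x)

lemma put_deriv (hgi : Integrable g volume) (hsupp : ∀ x, x ∉ Icc (0:ℝ) B → g x = 0) (ξ : ℝ) :
    HasDerivAt (fun s => ∫ x, max (s - x) 0 * g x) (∫ x in Iio ξ, g x) ξ := by
  have hne : ∀ᵐ x : ℝ, x ≠ ξ := by
    have : volume ({ξ} : Set ℝ) = 0 := Real.volume_singleton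
    rw [ae_iff]
    convert this using 2
    ext x; simp
  have key := hasDerivAt_integral_of_dominated_loc_of_lip (μ := volume)
      (F := fun s x => max (s - x) 0 * g x)
      (F' := fun x => (Iio ξ).indicator g x) (x₀ := ξ) (bound := fun x => |g x|)
      (Metric.ball_mem_nhds ξ one_pos)
      (Eventually.of_forall fun s =>
        ((continuous_const.sub continuous_id).max continuous_const).aestronglyMeasurable.mul
          hgi.aestronglyMeasurable)
      (int_put hgi hsupp ξ)
      (hgi.aestronglyMeasurable.indicator measurableSet_Iio)
      (Eventually.of_forall fun x => ?_) hgi.abs ?_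
  · obtain ⟨-, key2⟩ := key
    rwa [integral_indicator measurableSet_Iio] at key2
  · refine LipschitzOnWith.mono (LipschitzWith.lipschitzOnWith ?_) (subset_univ _)
    refine LipschitzWith.of_dist_le_mul fun s t => ?_
    rw [Real.dist_eq, Real.dist_eq, ← sub_mul, abs_mul]
    have h1 : |max (s - x) 0 - max (t - x) 0| ≤ |(s - x) - (t - x)| :=
      abs_max_sub_max_le_abs _ _ _
    have h2 : |(s - x) - (t - x)| = |s - t| := by ring_nf
    calc |max (s - x) 0 - max (t - x) 0| * |g x| ≤ |s - t| * |g x| := by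
          refine mul_le_mul_of_nonneg_right (h1.trans_eq h2) (abs_nonneg _)
      _ = |g x| * |s - t| := mul_comm _ _
      _ ≤ (Real.nnabs |g x| : ℝ) * |s - t| := by
          rw [Real.coe_nnabs, abs_abs]
  · filter_upwards [hne] with x hx
    rcases lt_or_gt_of_ne hx with hlt | hgt
    · -- x < ξ : near ξ, s - x > 0, function = (s-x) g x
      have hind : (Iio ξ).indicator g x = g x := indicator_of_mem (mem_Iio.2 hlt) _
      rw [hind]
      have hev : (fun s => max (s - x) 0 * g x) =ᶠ[nhds ξ] fun s => (s - x) * g x := by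
        filter_upwards [Ioi_mem_nhds hlt] with s hs
        rw [max_eq_left (by simp at hs ⊢; linarith)]
      refine HasDerivAt.congr_of_eventuallyEq ?_ hev
      simpa using ((hasDerivAt_id ξ).sub_const x).mul_const (g x)
    · have hind : (Iio ξ).indicator g x = 0 := indicator_of_notMem (by simpa using hgt.le) _
      rw [hind]
      have hev : (fun s => max (s - x) 0 * g x) =ᶠ[nhds ξ] fun _ => 0 := by
        filter_upwards [Iio_mem_nhds hgt] with s hs
        rw [max_eq_right (by simp at hs ⊢; linarith), zero_mul]
      exact (hasDerivAt_const ξ (0:ℝ)).congr_of_eventuallyEq hev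

variable {B : ℝ} {g : ℝ → ℝ}

lemma ae_zero_of_Ioo_intervals (hB : 0 < B) (hgi : Integrable g volume)
    (hP : ∀ a b : ℝ, a ∈ Ioo (0:ℝ) B → b ∈ Ioo (0:ℝ) B → a ≤ b → ∫ x in Ioc a b, g x = 0)
    (hsupp : ∀ x, x ∉ Icc (0:ℝ) B → g x = 0) :
    g =ᵐ[volume] 0 := by
  set P : ℝ → ℝ := fun s => ∫ t in (0:ℝ)..s, g t with hPdef
  have hPc : Continuous P := intervalIntegral.continuous_primitive (fun a b => hgi.intervalIntegrable) 0
  have hBm : B / 2 ∈ Ioo (0:ℝ) B := ⟨by linarith, by linarith⟩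
  have hPIoo : EqOn P (fun _ => P (B / 2)) (Ioo (0:ℝ) B) := by
    intro ξ hξ
    have hsub : P (B / 2) - P ξ = ∫ t in ξ..(B / 2), g t :=
      intervalIntegral.integral_interval_sub_left hgi.intervalIntegrable hgi.intervalIntegrable
    rcases le_or_gt ξ (B / 2) with hle | hlt
    · have : ∫ t in ξ..(B / 2), g t = 0 := by
        rw [intervalIntegral.integral_of_le hle]; exact hP ξ (B / 2) hξ hBm hle
      simp only []
      linarith [hsub, this]
    · have : ∫ t in ξ..(B / 2), g t = -∫ t in Ioc (B / 2) ξ, g t := by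
        rw [intervalIntegral.integral_symm, intervalIntegral.integral_of_le hlt.le]
      rw [hP (B / 2) ξ hBm hξ hlt.le, neg_zero] at this
      simp only []
      linarith [hsub, this]
  have hPicc : ∀ ξ ∈ Icc (0:ℝ) B, P ξ = P (B / 2) := by
    have hcl := hPIoo.closure hPc continuous_const
    rwa [closure_Ioo hB.ne] at hcl
  have hP0 : P 0 = 0 := intervalIntegral.integral_same
  have hhalf : P (B / 2) = 0 := by rw [← hPicc 0 ⟨le_refl 0, hB.le⟩, hP0]
  have hPall : ∀ ξ, P ξ = 0 := by
    intro ξ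
    rcases lt_or_ge ξ 0 with hlt | hge
    · have h1 : P ξ = -∫ t in ξ..(0:ℝ), g t := intervalIntegral.integral_symm _ _
      rw [h1, intervalIntegral.integral_of_le hlt.le, integral_Ioc_eq_integral_Ioo,
        setIntegral_eq_zero_of_forall_eq_zero, neg_zero]
      intro x hx
      exact hsupp x (fun hc => absurd hc.1 (not_le.2 hx.2))
    rcases le_or_gt ξ B with hle | hgt
    · rw [hPicc ξ ⟨hge, hle⟩, hhalf]
    · have hadd : P B + ∫ t in B..ξ, g t = P ξ :=
        intervalIntegral.integral_add_adjacent_intervals hgi.intervalIntegrable hgi.intervalIntegrable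
      have h2 : ∫ t in B..ξ, g t = 0 := by
        rw [intervalIntegral.integral_of_le hgt.le, setIntegral_eq_zero_of_forall_eq_zero]
        intro x hx
        exact hsupp x (fun hc => absurd hc.2 (not_le.2 hx.1))
      rw [← hadd, h2, hPicc B ⟨hB.le, le_refl B⟩, hhalf, add_zero]
  refine ae_zero_of_intervals g hgi fun a b hab => ?_
  have h3 : ∫ x in Ioc a b, g x = ∫ x in a..b, g x := (intervalIntegral.integral_of_le hab.le).symm
  have h4 : P b - P a = ∫ x in a..b, g x :=
    intervalIntegral.integral_interval_sub_left hgi.intervalIntegrable hgi.intervalIntegrable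
  rw [h3, ← h4, hPall a, hPall b, sub_zero]

lemma call_core (hB : 0 < B) (hgi : Integrable g volume)
    (hsupp : ∀ x, x ∉ Icc (0:ℝ) B → g x = 0)
    (h0 : ∀ ξ ∈ Icc (0:ℝ) B, (∫ x, max (x - ξ) 0 * g x) = 0) :
    g =ᵐ[volume] 0 := by
  have hF : ∀ ξ ∈ Ioo (0:ℝ) B, ∫ x in Ioi ξ, g x = 0 := by
    intro ξ hξ
    have hd := call_deriv hgi hsupp ξ
    have hev : (fun s => ∫ x, max (x - s) 0 * g x) =ᶠ[nhds ξ] fun _ => (0:ℝ) := by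
      filter_upwards [Ioo_mem_nhds hξ.1 hξ.2] with s hs
      exact h0 s (Ioo_subset_Icc_self hs)
    have h1 : HasDerivAt (fun s => ∫ x, max (x - s) 0 * g x) 0 ξ :=
      (hasDerivAt_const ξ (0:ℝ)).congr_of_eventuallyEq hev
    have h2 := h1.unique hd
    linarith [h2]
  refine ae_zero_of_Ioo_intervals hB hgi (fun a b ha hb hab => ?_) hsupp
  have hu : Ioc a b ∪ Ioi b = Ioi a := Ioc_union_Ioi_eq_Ioi hab
  have hdisj : Disjoint (Ioc a b) (Ioi b) := Ioc_disjoint_Ioi le_rfl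
  have hadd : ∫ x in Ioc a b ∪ Ioi b, g x =
      (∫ x in Ioc a b, g x) + ∫ x in Ioi b, g x :=
    setIntegral_union hdisj measurableSet_Ioi hgi.integrableOn hgi.integrableOn
  rw [hu, hF a ha, hF b hb] at hadd
  linarith [hadd]

lemma put_core (hB : 0 < B) (hgi : Integrable g volume)
    (hsupp : ∀ x, x ∉ Icc (0:ℝ) B → g x = 0)
    (h0 : ∀ ξ ∈ Icc (0:ℝ) B, (∫ x, max (ξ - x) 0 * g x) = 0) :
    g =ᵐ[volume] 0 := by
  have hF : ∀ ξ ∈ Ioo (0:ℝ) B, ∫ x in Iio ξ, g x = 0 := by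
    intro ξ hξ
    have hd := put_deriv hgi hsupp ξ
    have hev : (fun s => ∫ x, max (s - x) 0 * g x) =ᶠ[nhds ξ] fun _ => (0:ℝ) := by
      filter_upwards [Ioo_mem_nhds hξ.1 hξ.2] with s hs
      exact h0 s (Ioo_subset_Icc_self hs)
    have h1 : HasDerivAt (fun s => ∫ x, max (s - x) 0 * g x) 0 ξ :=
      (hasDerivAt_const ξ (0:ℝ)).congr_of_eventuallyEq hev
    exact (h1.unique hd).symm
  refine ae_zero_of_Ioo_intervals hB hgi (fun a b ha hb hab => ?_) hsupp
  have hu : Iio a ∪ Ico a b = Iio b := Iio_union_Ico_eq_Iio hab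
  have hdisj : Disjoint (Iio a) (Ico a b) := (Iio_disjoint_Ici le_rfl).mono_right Ico_subset_Ici_self
  have hadd : ∫ x in Iio a ∪ Ico a b, g x =
      (∫ x in Iio a, g x) + ∫ x in Ico a b, g x :=
    setIntegral_union hdisj measurableSet_Ico hgi.integrableOn hgi.integrableOn
  rw [hu, hF a ha, hF b hb] at hadd
  rw [integral_Ioc_eq_integral_Ioo, ← integral_Ico_eq_integral_Ioo]
  linarith [hadd]
lemma interval_to_full (hB : (0:ℝ) ≤ B) (F : ℝ → ℝ)
    (hF : ∀ x, x ∉ Icc (0:ℝ) B → F x = 0) :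
    ∫ x in (0:ℝ)..B, F x = ∫ x, F x := by
  rw [intervalIntegral.integral_of_le hB, ← integral_Icc_eq_integral_Ioc,
    setIntegral_eq_integral_of_forall_compl_eq_zero hF]

lemma cont_zero (hB : 0 < B) {G : ℝ → ℝ} (hGc : Continuous G)
    (hae : (Icc (0:ℝ) B).indicator G =ᵐ[volume] 0) :
    ∀ ξ ∈ Icc (0:ℝ) B, G ξ = 0 := by
  intro ξ hξ
  by_contra hne
  have hopen : IsOpen (G ⁻¹' {(0:ℝ)}ᶜ) := isOpen_compl_singleton.preimage hGc
  obtain ⟨δ, hδ, hball⟩ := Metric.isOpen_iff.1 hopen ξ hne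
  set l := max (ξ - δ) 0 with hl
  set r := min (ξ + δ) B with hr
  have hlr : l < r :=
    max_lt (lt_min (by linarith) (by linarith [hξ.2])) (lt_min (by linarith [hξ.1]) hB)
  have hsub : Ioo l r ⊆ {x | (Icc (0:ℝ) B).indicator G x ≠ 0} := by
    intro x hx
    have hxI : x ∈ Icc (0:ℝ) B :=
      ⟨le_of_lt (lt_of_le_of_lt (le_max_right _ _) hx.1),
       le_of_lt (lt_of_lt_of_le hx.2 (min_le_right _ _))⟩
    rw [mem_setOf_eq, indicator_of_mem hxI]
    refine hball ?_
    rw [Metric.mem_ball, Real.dist_eq, abs_sub_lt_iff]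
    have h1 : ξ - δ ≤ l := le_max_left _ _
    have h2 : r ≤ ξ + δ := min_le_left _ _
    exact ⟨by linarith [hx.1, hx.2], by linarith [hx.1, hx.2]⟩
  have hnull : volume {x | (Icc (0:ℝ) B).indicator G x ≠ 0} = 0 := by
    rw [EventuallyEq, ae_iff] at hae
    simpa using hae
  have h0 := measure_mono_null hsub hnull
  rw [Real.volume_Ioo] at h0
  rw [ENNReal.ofReal_eq_zero] at h0
  linarith
/-- If `f ∈ L²([0,B])` and `(γ f)(ξ) = 0` for every `ξ ∈ [0,B]`,
then `f = 0` a.e. on `[0,B]`: the null space of the restricted call operator `γ`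
is trivial, and similarly for `γ*`, `γ*γ` and `γγ*`. -/
theorem stmt_9 (B : ℝ) (hB : 0 < B) (f : ℝ → ℝ)
    (hf : MemLp f 2 (volume.restrict (Icc (0:ℝ) B))) :
    ((∀ ξ ∈ Icc (0:ℝ) B, (∫ x in (0:ℝ)..B, max (x - ξ) 0 * f x) = 0) →
      f =ᵐ[volume.restrict (Icc (0:ℝ) B)] 0) ∧
    ((∀ ξ ∈ Icc (0:ℝ) B, (∫ x in (0:ℝ)..B, max (ξ - x) 0 * f x) = 0) →
      f =ᵐ[volume.restrict (Icc (0:ℝ) B)] 0) ∧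
    ((∀ ξ ∈ Icc (0:ℝ) B,
        (∫ u in (0:ℝ)..B, max (ξ - u) 0 * ∫ x in (0:ℝ)..B, max (x - u) 0 * f x) = 0) →
      f =ᵐ[volume.restrict (Icc (0:ℝ) B)] 0) ∧
    ((∀ ξ ∈ Icc (0:ℝ) B,
        (∫ u in (0:ℝ)..B, max (u - ξ) 0 * ∫ x in (0:ℝ)..B, max (u - x) 0 * f x) = 0) →
      f =ᵐ[volume.restrict (Icc (0:ℝ) B)] 0) := by
  set f0 : ℝ → ℝ := (Icc (0:ℝ) B).indicator f with hf0
  have hsupp : ∀ x, x ∉ Icc (0:ℝ) B → f0 x = 0 := fun x hx => indicator_of_notMem hx f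
  have hfi : Integrable f0 volume := by
    rw [hf0, integrable_indicator_iff measurableSet_Icc]
    exact hf.integrable one_le_two
  -- conversion of the conclusion
  have hconv : f0 =ᵐ[volume] 0 → f =ᵐ[volume.restrict (Icc (0:ℝ) B)] 0 := by
    intro h
    rw [EventuallyEq, ae_restrict_iff' measurableSet_Icc]
    filter_upwards [h] with x hx hmem
    rwa [hf0, indicator_of_mem hmem] at hx
  -- representation of the call/put transforms as full-space integrals
  have hcallrep : ∀ ξ : ℝ, (∫ x in (0:ℝ)..B, max (x - ξ) 0 * f x) =
      ∫ x, max (x - ξ) 0 * f0 x := by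
    intro ξ
    have e1 : (∫ x in (0:ℝ)..B, max (x - ξ) 0 * f x) =
        ∫ x in (0:ℝ)..B, max (x - ξ) 0 * f0 x := by
      refine intervalIntegral.integral_congr fun x hx => ?_
      rw [uIcc_of_le hB.le] at hx
      rw [hf0, indicator_of_mem hx]
    rw [e1]
    exact interval_to_full hB.le _ (fun x hx => by rw [hsupp x hx, mul_zero])
  have hputrep : ∀ ξ : ℝ, (∫ x in (0:ℝ)..B, max (ξ - x) 0 * f x) =
      ∫ x, max (ξ - x) 0 * f0 x := by
    intro ξ
    have e1 : (∫ x in (0:ℝ)..B, max (ξ - x) 0 * f x) =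
        ∫ x in (0:ℝ)..B, max (ξ - x) 0 * f0 x := by
      refine intervalIntegral.integral_congr fun x hx => ?_
      rw [uIcc_of_le hB.le] at hx
      rw [hf0, indicator_of_mem hx]
    rw [e1]
    exact interval_to_full hB.le _ (fun x hx => by rw [hsupp x hx, mul_zero])
  -- Part 1
  have part1 : (∀ ξ ∈ Icc (0:ℝ) B, (∫ x in (0:ℝ)..B, max (x - ξ) 0 * f x) = 0) →
      f =ᵐ[volume.restrict (Icc (0:ℝ) B)] 0 := by
    intro h
    refine hconv (call_core hB hfi hsupp fun ξ hξ => ?_)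
    rw [← hcallrep ξ]
    exact h ξ hξ
  have part2 : (∀ ξ ∈ Icc (0:ℝ) B, (∫ x in (0:ℝ)..B, max (ξ - x) 0 * f x) = 0) →
      f =ᵐ[volume.restrict (Icc (0:ℝ) B)] 0 := by
    intro h
    refine hconv (put_core hB hfi hsupp fun ξ hξ => ?_)
    rw [← hputrep ξ]
    exact h ξ hξ
  refine ⟨part1, part2, ?_, ?_⟩
  -- Part 3 : γ*γ
  · intro h
    set G : ℝ → ℝ := fun u => ∫ x, max (x - u) 0 * f0 x with hG
    have hGc : Continuous G :=
      continuous_iff_continuousAt.2 fun u => (call_deriv hfi hsupp u).continuousAt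
    set h1 : ℝ → ℝ := (Icc (0:ℝ) B).indicator G with hh1
    have hsupp1 : ∀ u, u ∉ Icc (0:ℝ) B → h1 u = 0 := fun u hu => indicator_of_notMem hu G
    have h1i : Integrable h1 volume := by
      rw [hh1, integrable_indicator_iff measurableSet_Icc]
      exact hGc.continuousOn.integrableOn_compact isCompact_Icc
    have hrep : ∀ ξ ∈ Icc (0:ℝ) B, (∫ u, max (ξ - u) 0 * h1 u) = 0 := by
      intro ξ hξ
      have e1 : (∫ u, max (ξ - u) 0 * h1 u) = ∫ u in (0:ℝ)..B, max (ξ - u) 0 * h1 u :=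
        (interval_to_full hB.le _ (fun u hu => by rw [hsupp1 u hu, mul_zero])).symm
      have e2 : (∫ u in (0:ℝ)..B, max (ξ - u) 0 * h1 u) =
          ∫ u in (0:ℝ)..B, max (ξ - u) 0 * ∫ x in (0:ℝ)..B, max (x - u) 0 * f x := by
        refine intervalIntegral.integral_congr fun u hu => ?_
        rw [uIcc_of_le hB.le] at hu
        rw [hh1, indicator_of_mem hu]
        congr 1
        exact (hcallrep u).symm
      rw [e1, e2]
      exact h ξ hξ
    have hae := put_core hB h1i hsupp1 hrep
    have hG0 : ∀ ξ ∈ Icc (0:ℝ) B, G ξ = 0 := cont_zero hB hGc hae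
    refine hconv (call_core hB hfi hsupp fun ξ hξ => hG0 ξ hξ)
  -- Part 4 : γγ*
  · intro h
    set G : ℝ → ℝ := fun u => ∫ x, max (u - x) 0 * f0 x with hG
    have hGc : Continuous G :=
      continuous_iff_continuousAt.2 fun u => (put_deriv hfi hsupp u).continuousAt
    set h1 : ℝ → ℝ := (Icc (0:ℝ) B).indicator G with hh1
    have hsupp1 : ∀ u, u ∉ Icc (0:ℝ) B → h1 u = 0 := fun u hu => indicator_of_notMem hu G
    have h1i : Integrable h1 volume := by
      rw [hh1, integrable_indicator_iff measurableSet_Icc]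
      exact hGc.continuousOn.integrableOn_compact isCompact_Icc
    have hrep : ∀ ξ ∈ Icc (0:ℝ) B, (∫ u, max (u - ξ) 0 * h1 u) = 0 := by
      intro ξ hξ
      have e1 : (∫ u, max (u - ξ) 0 * h1 u) = ∫ u in (0:ℝ)..B, max (u - ξ) 0 * h1 u :=
        (interval_to_full hB.le _ (fun u hu => by rw [hsupp1 u hu, mul_zero])).symm
      have e2 : (∫ u in (0:ℝ)..B, max (u - ξ) 0 * h1 u) =
          ∫ u in (0:ℝ)..B, max (u - ξ) 0 * ∫ x in (0:ℝ)..B, max (u - x) 0 * f x := by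
        refine intervalIntegral.integral_congr fun u hu => ?_
        rw [uIcc_of_le hB.le] at hu
        rw [hh1, indicator_of_mem hu]
        congr 1
        exact (hputrep u).symm
      rw [e1, e2]
      exact h ξ hξ
    have hae := call_core hB h1i hsupp1 hrep
    have hG0 : ∀ ξ ∈ Icc (0:ℝ) B, G ξ = 0 := cont_zero hB hGc hae
    refine hconv (put_core hB hfi hsupp fun ξ hξ => hG0 ξ hξ)
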